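/- Let r < K be integers with K - r ≥ 1, let ξ ∈ [0,1), and for k ∈ {r+1,...,K} let m_k ∈ [(1-ξ)/(K-r), 1) with P_k = (m_k - (1-ξ)/(K-r))/(1 - (1-ξ)/(K-r)) > 0. Then 1/(Σ_{k=r+1}^{K} P_k/(1-P_k)) ≤ ((K-r) - Σ_{k=r+1}^{K} m_k) / ((K-r)·(Σ_{k=1}^{K} m_k - 1)), where Σ_{k=1}^{K} m_k > 1 and ξ = Σ_{k=1}^{r} m_k. -/

import Mathlib

/-- Shuffle-aware load bound: with `r < K`, `ξ = ∑_{k=1}^{r} m k ∈ [0,1)`,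
`m k ∈ [(1-ξ)/(K-r), 1)` and `P k = (m k - (1-ξ)/(K-r))/(1-(1-ξ)/(K-r)) > 0`
for `k ∈ {r+1,...,K}`, and `∑_{k=1}^{K} m k > 1`, we have
`1/(∑_{k=r+1}^{K} P k/(1-P k)) ≤ ((K-r) - ∑_{k=r+1}^{K} m k)/((K-r)(∑_{k=1}^{K} m k - 1))`. -/
theorem stmt_13 (K r : ℕ) (hrK : r < K)
    (ξ : ℝ) (hξ0 : 0 ≤ ξ) (hξ1 : ξ < 1)
    (m P : ℕ → ℝ)
    (hξdef : ξ = ∑ k ∈ Finset.Icc 1 r, m k)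
    (hm : ∀ k ∈ Finset.Icc (r + 1) K,
      (1 - ξ) / ((K : ℝ) - r) ≤ m k ∧ m k < 1)
    (hPdef : ∀ k ∈ Finset.Icc (r + 1) K,
      P k = (m k - (1 - ξ) / ((K : ℝ) - r)) / (1 - (1 - ξ) / ((K : ℝ) - r)))
    (hPpos : ∀ k ∈ Finset.Icc (r + 1) K, 0 < P k)
    (hsum : 1 < ∑ k ∈ Finset.Icc 1 K, m k) :
    1 / (∑ k ∈ Finset.Icc (r + 1) K, P k / (1 - P k))
      ≤ (((K : ℝ) - r) - ∑ k ∈ Finset.Icc (r + 1) K, m k) /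
          (((K : ℝ) - r) * ((∑ k ∈ Finset.Icc 1 K, m k) - 1)) := by
  have hrK' : (r : ℝ) + 1 ≤ (K : ℝ) := by exact_mod_cast hrK
  set N : ℝ := (K : ℝ) - r with hNdef
  have hN1 : (1 : ℝ) ≤ N := by simp only [hNdef]; linarith
  have hN0 : (0 : ℝ) < N := by linarith
  set A := Finset.Icc (r + 1) K with hA
  have hcardN : (A.card : ℝ) = N := by
    have h1 : A.card = K - r := by simp [hA, Nat.card_Icc]
    rw [h1, Nat.cast_sub hrK.le]
  set c : ℝ := (1 - ξ) / N with hcdef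
  have hcle : c ≤ 1 := le_trans (div_le_self (by linarith) hN1) (by linarith)
  have hAne : A.Nonempty := by
    rw [hA, Finset.nonempty_Icc]; omega
  have hc0 : (0 : ℝ) < 1 - c := by
    rcases lt_or_eq_of_le hcle with h | h
    · linarith
    · exfalso
      obtain ⟨k, hk⟩ := hAne
      have hp := hPpos k hk
      rw [hPdef k hk, h] at hp
      simp at hp
  have hA_pos : ∀ k ∈ A, 0 < 1 - m k := fun k hk => by linarith [(hm k hk).2]
  -- split the total sum
  have hsplit : (∑ k ∈ Finset.Icc 1 K, m k)
      = ξ + ∑ k ∈ A, m k := by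
    have hu : Finset.Icc 1 K = Finset.Icc 1 r ∪ A := by
      ext a; simp only [hA, Finset.mem_Icc, Finset.mem_union]; omega
    have hd : Disjoint (Finset.Icc 1 r) A := by
      rw [Finset.disjoint_left]; intro a ha ha'
      simp only [hA, Finset.mem_Icc] at ha ha'; omega
    rw [hu, Finset.sum_union hd, hξdef]
  set T : ℝ := ∑ k ∈ A, m k with hTdef
  set U : ℝ := ∑ k ∈ A, (1 - m k) with hUdef
  set H : ℝ := ∑ k ∈ A, (1 - m k)⁻¹ with hHdef
  have hU : U = N - T := by
    rw [hUdef, Finset.sum_sub_distrib, Finset.sum_const, nsmul_eq_mul, mul_one, hcardN, hTdef]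
  have hNc : N * c = 1 - ξ := by
    rw [hcdef, mul_div_cancel₀ _ (ne_of_gt hN0)]
  have hD_pos : (0 : ℝ) < T - (1 - ξ) := by
    have := hsum; rw [hsplit] at this; linarith
  have hU_pos : (0 : ℝ) < U := Finset.sum_pos hA_pos hAne
  -- Cauchy-Schwarz / AM-HM
  have hCS : N ^ 2 ≤ U * H := by
    have := Finset.sum_sq_le_sum_mul_sum_of_sq_eq_mul A
      (r := fun _ => (1 : ℝ)) (f := fun k => 1 - m k) (g := fun k => (1 - m k)⁻¹)
      (fun k hk => (hA_pos k hk).le) (fun k hk => (inv_nonneg).2 (hA_pos k hk).le)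
      (fun k hk => by
        rw [one_pow, mul_inv_cancel₀ (ne_of_gt (hA_pos k hk))])
    simpa [hcardN, hUdef, hHdef] using this
  -- rewrite the main sum
  have hS_eq : (∑ k ∈ A, P k / (1 - P k)) = (1 - c) * H - N := by
    have hterm : ∀ k ∈ A, P k / (1 - P k) = (1 - c) * (1 - m k)⁻¹ - 1 := by
      intro k hk
      rw [hPdef k hk]
      have h1 := hA_pos k hk
      have h2 : 1 - (m k - c) / (1 - c) = (1 - m k) / (1 - c) := by
        field_simp
        ring
      rw [h2]
      rw [div_div_div_eq]
      field_simp
      ring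
    rw [Finset.sum_congr rfl hterm, Finset.sum_sub_distrib, ← Finset.mul_sum,
      Finset.sum_const, nsmul_eq_mul, mul_one, hcardN, hHdef]
  set S : ℝ := ∑ k ∈ A, P k / (1 - P k) with hSdef
  have hDU : (1 - c) * N - U = T - (1 - ξ) := by
    rw [hU]; nlinarith [hNc]
  have hkey : N * (T - (1 - ξ)) / U ≤ S := by
    rw [hS_eq, div_le_iff₀ hU_pos]
    nlinarith [hCS, hc0, hDU]
  have hquot_pos : 0 < N * (T - (1 - ξ)) / U := by positivity
  have h1S : 1 / S ≤ 1 / (N * (T - (1 - ξ)) / U) :=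
    one_div_le_one_div_of_le hquot_pos hkey
  have hRHS : (N - T) / (N * ((∑ k ∈ Finset.Icc 1 K, m k) - 1))
      = 1 / (N * (T - (1 - ξ)) / U) := by
    rw [hsplit, hU.symm]
    rw [one_div, inv_div]
    congr 1
    ring
  calc 1 / S ≤ 1 / (N * (T - (1 - ξ)) / U) := h1S
    _ = (N - T) / (N * ((∑ k ∈ Finset.Icc 1 K, m k) - 1)) := hRHS.symm
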